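/- Let T:[0,1]→[0,1] be continuous and suppose that for every N it admits a horseshoe of order N. Then for all k,ℓ ∈ ℕ, every total strict order ≺ on the symbols (s_i^j) with 1 ≤ i ≤ k, 0 ≤ j ≤ ℓ is realized by k orbits of length ℓ+1 of T: there exist x₁,…,x_k ∈ [0,1] such that s_i^j ≺ s_{i'}^{j'} if and only if T^j(x_i) < T^{j'}(x_{i'}), for all i,i',j,j'. -/

import Mathlib

open Set

/-- A continuous map from `[u,v]` whose endpoints go to `a` and `b` has a
subinterval mapping exactly onto `[a,b]`. -/
lemma onto_subinterval {f : ℝ → ℝ} {u v a b : ℝ} (huv : u ≤ v)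
    (hf : ContinuousOn f (Icc u v)) (hab : a ≤ b) (hfu : f u = a) (hfv : f v = b) :
    ∃ c d, u ≤ c ∧ c ≤ d ∧ d ≤ v ∧ f '' Icc c d = Icc a b := by
  set S : Set ℝ := {x | x ∈ Icc u v ∧ f x = b} with hS
  have hScl : IsClosed S := hf.preimage_isClosed_of_isClosed isClosed_Icc isClosed_singleton
  have hSne : S.Nonempty := ⟨v, ⟨huv, le_rfl⟩, hfv⟩
  have hSbd : BddBelow S := ⟨u, fun x hx => hx.1.1⟩
  set d := sInf S with hd
  have hdS : d ∈ S := hScl.csInf_mem hSne hSbd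
  have hud : u ≤ d := hdS.1.1
  have hdv : d ≤ v := hdS.1.2
  have hfd : f d = b := hdS.2
  set S2 : Set ℝ := {x | x ∈ Icc u d ∧ f x = a} with hS2
  have hS2cl : IsClosed S2 :=
    (hf.mono (Icc_subset_Icc le_rfl hdv)).preimage_isClosed_of_isClosed isClosed_Icc
      isClosed_singleton
  have hS2ne : S2.Nonempty := ⟨u, ⟨le_rfl, hud⟩, hfu⟩
  have hS2bd : BddAbove S2 := ⟨d, fun x hx => hx.1.2⟩
  set c := sSup S2 with hc
  have hcS2 : c ∈ S2 := hS2cl.csSup_mem hS2ne hS2bd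
  have huc : u ≤ c := hcS2.1.1
  have hcd : c ≤ d := hcS2.1.2
  have hfc : f c = a := hcS2.2
  have hsub : Icc c d ⊆ Icc u v := Icc_subset_Icc huc hdv
  refine ⟨c, d, huc, hcd, hdv, ?_⟩
  apply Subset.antisymm
  · rintro y ⟨x, hx, rfl⟩
    constructor
    · by_contra h
      push_neg at h
      obtain ⟨z, hz, hfz⟩ := intermediate_value_Icc hx.2
        (hf.mono (Icc_subset_Icc (huc.trans hx.1) hdv))
        (show a ∈ Icc (f x) (f d) from ⟨h.le, hfd ▸ hab⟩)
      have hzc : z ≤ c := le_csSup hS2bd ⟨⟨huc.trans (hx.1.trans hz.1), hz.2⟩, hfz⟩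
      have hcz : c ≤ z := hx.1.trans hz.1
      have hxc : x = c := le_antisymm (hz.1.trans hzc) hx.1
      rw [hxc, hfc] at h
      exact lt_irrefl a h
    · by_contra h
      push_neg at h
      obtain ⟨z, hz, hfz⟩ := intermediate_value_Icc hx.1
        (hf.mono (Icc_subset_Icc huc (hx.2.trans hdv)))
        (show b ∈ Icc (f c) (f x) from ⟨hfc ▸ hab, h.le⟩)
      have hdz : d ≤ z := csInf_le hSbd ⟨⟨huc.trans hz.1, (hz.2.trans hx.2).trans hdv⟩, hfz⟩
      have hzd : z ≤ d := hz.2.trans hx.2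
      have hxd : x = d := le_antisymm hx.2 (hdz.trans hz.2)
      rw [hxd, hfd] at h
      exact lt_irrefl b h
  · have := intermediate_value_Icc hcd (hf.mono hsub)
    rwa [hfc, hfd] at this

/-- Same, with endpoint values reversed. -/
lemma onto_subinterval' {f : ℝ → ℝ} {u v a b : ℝ} (huv : u ≤ v)
    (hf : ContinuousOn f (Icc u v)) (hab : a ≤ b) (hfu : f u = b) (hfv : f v = a) :
    ∃ c d, u ≤ c ∧ c ≤ d ∧ d ≤ v ∧ f '' Icc c d = Icc a b := by
  have hneg : ContinuousOn (fun x : ℝ => f (-x)) (Icc (-v) (-u)) := by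
    apply hf.comp continuousOn_neg
    intro x hx
    exact ⟨by linarith [hx.2], by linarith [hx.1]⟩
  obtain ⟨c, d, h1, h2, h3, h4⟩ := onto_subinterval (f := fun x => f (-x))
    (neg_le_neg huv) hneg hab (by simp [hfv]) (by simp [hfu])
  refine ⟨-d, -c, by linarith, by linarith, by linarith, ?_⟩
  have : Icc (-d) (-c) = Neg.neg '' Icc c d := (Set.image_neg_Icc c d).symm
  rw [this, ← Set.image_comp] at *
  convert h4 using 2
  all_goals rfl

/-- A compact interval contained in the image of another maps via a subinterval. -/
lemma onto_sub {f : ℝ → ℝ} {u v a b : ℝ} (huv : u ≤ v)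
    (hf : ContinuousOn f (Icc u v)) (hab : a ≤ b) (h : Icc a b ⊆ f '' Icc u v) :
    ∃ c d, u ≤ c ∧ c ≤ d ∧ d ≤ v ∧ f '' Icc c d = Icc a b := by
  obtain ⟨p, hp, hpa⟩ := h (left_mem_Icc.2 hab)
  obtain ⟨q, hq, hqb⟩ := h (right_mem_Icc.2 hab)
  rcases le_total p q with hpq | hqp
  · obtain ⟨c, d, h1, h2, h3, h4⟩ :=
      onto_subinterval hpq (hf.mono (Icc_subset_Icc hp.1 hq.2)) hab hpa hqb
    exact ⟨c, d, hp.1.trans h1, h2, h3.trans hq.2, h4⟩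
  · obtain ⟨c, d, h1, h2, h3, h4⟩ :=
      onto_subinterval' hqp (hf.mono (Icc_subset_Icc hq.1 hp.2)) hab hqb hpa
    exact ⟨c, d, hq.1.trans h1, h2, h3.trans hp.2, h4⟩

/-- Itinerary lemma: one can follow any finite symbolic word through a horseshoe. -/
lemma itinerary {T : ℝ → ℝ} (hTc : ContinuousOn T (Icc 0 1)) {N : ℕ}
    {a b : Fin N → ℝ} (hab : ∀ i, a i ≤ b i)
    (h01 : ∀ i, Icc (a i) (b i) ⊆ Icc (0:ℝ) 1)
    (hcov : ∀ i j, Icc (a j) (b j) ⊆ T '' Icc (a i) (b i)) :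
    ∀ (m : ℕ) (w : ℕ → Fin N), ∃ c d, c ≤ d ∧
      ∀ j ≤ m, T^[j] '' Icc c d ⊆ Icc (a (w j)) (b (w j)) := by
  intro m
  induction m with
  | zero =>
    intro w
    refine ⟨a (w 0), b (w 0), hab _, ?_⟩
    intro j hj
    interval_cases j
    simp
  | succ m ih =>
    intro w
    obtain ⟨c, d, hcd, hit⟩ := ih (fun j => w (j + 1))
    have hsub : Icc c d ⊆ Icc (a (w 1)) (b (w 1)) := by
      have := hit 0 (Nat.zero_le m)
      simpa using this
    have hcd' : Icc c d ⊆ T '' Icc (a (w 0)) (b (w 0)) :=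
      hsub.trans (hcov (w 0) (w 1))
    obtain ⟨c', d', h1, h2, h3, h4⟩ :=
      onto_sub (hab (w 0)) (hTc.mono (h01 (w 0))) hcd hcd'
    refine ⟨c', d', h2, ?_⟩
    intro j hj
    match j with
    | 0 => simpa using Icc_subset_Icc h1 h3
    | j + 1 =>
      rw [Function.iterate_succ, Set.image_comp, h4]
      exact hit j (Nat.succ_le_succ_iff.mp hj)

/-- A continuous interval map with horseshoes of all orders realizes every total
strict order on k·(ℓ+1) symbols by k orbits of length ℓ+1. -/
theorem orders_realized_by_orbits (T : ℝ → ℝ)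
    (hTc : ContinuousOn T (Icc 0 1)) (hTm : MapsTo T (Icc 0 1) (Icc 0 1))
    (hhorse : ∀ N : ℕ, ∃ I : Fin N → Set ℝ,
      (∀ i, ∃ a b : ℝ, a < b ∧ 0 ≤ a ∧ b ≤ 1 ∧ I i = Icc a b) ∧
      (∀ i j, i ≠ j → interior (I i) ∩ interior (I j) = ∅) ∧
      (∀ i j, I j ⊆ T '' I i)) :
    ∀ (k ℓ : ℕ) (r : Fin k × Fin (ℓ + 1) → Fin k × Fin (ℓ + 1) → Prop),
      IsStrictTotalOrder (Fin k × Fin (ℓ + 1)) r →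
      ∃ x : Fin k → ℝ, (∀ i, x i ∈ Icc (0:ℝ) 1) ∧
        ∀ (i i' : Fin k) (j j' : Fin (ℓ + 1)),
          r (i, j) (i', j') ↔ T^[(j : ℕ)] (x i) < T^[(j' : ℕ)] (x i') := by
  intro k ℓ r hr
  haveI := hr
  set M := k * (ℓ + 1) with hM
  set N := 2 * M with hN
  obtain ⟨I, hI, hdisj, hcov⟩ := hhorse N
  choose a b hlt ha0 hb1 hIab using hI
  have hab : ∀ i, a i ≤ b i := fun i => (hlt i).le
  have h01 : ∀ i, Icc (a i) (b i) ⊆ Icc (0:ℝ) 1 := fun i =>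
    Icc_subset_Icc (ha0 i) (hb1 i)
  have hcov' : ∀ i j, Icc (a j) (b j) ⊆ T '' Icc (a i) (b i) := by
    intro i j; rw [← hIab, ← hIab]; exact hcov i j
  -- a is injective
  have hainj : Function.Injective a := by
    intro i j hij
    by_contra hne
    have hd := hdisj i j hne
    rw [hIab, hIab, interior_Icc, interior_Icc, hij] at hd
    have : (Ioo (a j) (min (b i) (b j))).Nonempty := by
      refine nonempty_Ioo.2 (lt_min ?_ (hlt j))
      rw [← hij]; exact hlt i
    obtain ⟨z, hz⟩ := this
    have : z ∈ Ioo (a j) (b i) ∩ Ioo (a j) (b j) :=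
      ⟨⟨hz.1, hz.2.trans_le (min_le_left _ _)⟩, ⟨hz.1, hz.2.trans_le (min_le_right _ _)⟩⟩
    rw [hd] at this
    exact this
  -- sort the intervals
  set σ := Tuple.sort a with hσ
  have hmono : StrictMono (a ∘ σ) :=
    (Tuple.monotone_sort a).strictMono_of_injective (hainj.comp σ.injective)
  -- intervals are ordered: right endpoint ≤ next left endpoint
  have hadj : ∀ u u' : Fin N, u < u' → b (σ u) ≤ a (σ u') := by
    intro u u' huu'
    by_contra hcon
    push_neg at hcon
    have hne : σ u ≠ σ u' := fun h => absurd (σ.injective h) huu'.ne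
    have hd := hdisj (σ u) (σ u') hne
    rw [hIab, hIab, interior_Icc, interior_Icc] at hd
    have hax : a (σ u) < a (σ u') := hmono huu'
    have : (Ioo (a (σ u')) (min (b (σ u)) (b (σ u')))).Nonempty :=
      nonempty_Ioo.2 (lt_min hcon (hlt _))
    obtain ⟨z, hz⟩ := this
    have : z ∈ Ioo (a (σ u)) (b (σ u)) ∩ Ioo (a (σ u')) (b (σ u')) :=
      ⟨⟨hax.trans hz.1, hz.2.trans_le (min_le_left _ _)⟩,
       ⟨hz.1, hz.2.trans_le (min_le_right _ _)⟩⟩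
    rw [hd] at this
    exact this
  -- positions: use every other interval
  have hpos : ∀ t : Fin M, 2 * (t : ℕ) < N := by
    intro t; have := t.isLt; omega
  have hpos1 : ∀ t : Fin M, 2 * (t : ℕ) + 1 < N := by
    intro t; have := t.isLt; omega
  set pos : Fin M → Fin N := fun t => σ ⟨2 * t, hpos t⟩ with hposdef
  -- separation
  have hsep : ∀ t t' : Fin M, t < t' →
      ∀ x ∈ Icc (a (pos t)) (b (pos t)), ∀ y ∈ Icc (a (pos t')) (b (pos t')), x < y := by
    intro t t' htt' x hx y hy
    have h1 : b (σ ⟨2 * t, hpos t⟩) ≤ a (σ ⟨2 * (t : ℕ) + 1, hpos1 t⟩) := by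
      apply hadj
      simp [Fin.lt_def]
    have h2 : a (σ ⟨2 * (t : ℕ) + 1, hpos1 t⟩) < b (σ ⟨2 * (t : ℕ) + 1, hpos1 t⟩) := hlt _
    have h3 : b (σ ⟨2 * (t : ℕ) + 1, hpos1 t⟩) ≤ a (σ ⟨2 * t', hpos t'⟩) := by
      apply hadj
      simp only [Fin.lt_def]
      have : (t : ℕ) < (t' : ℕ) := htt'
      omega
    calc x ≤ b (pos t) := hx.2
      _ ≤ a (σ ⟨2 * (t : ℕ) + 1, hpos1 t⟩) := h1
      _ < b (σ ⟨2 * (t : ℕ) + 1, hpos1 t⟩) := h2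
      _ ≤ a (pos t') := h3
      _ ≤ y := hy.1
  -- rank of a symbol under r: number of strict predecessors
  classical
  have hcard : Fintype.card (Fin k × Fin (ℓ + 1)) = M := by
    simp [hM, Fintype.card_prod]
  have hranklt : ∀ s : Fin k × Fin (ℓ + 1),
      (Finset.univ.filter (fun t => r t s)).card < M := by
    intro s
    rw [← hcard, ← Finset.card_univ]
    apply Finset.card_lt_card
    refine ⟨Finset.filter_subset _ _, fun hsub => ?_⟩
    have := hsub (Finset.mem_univ s)
    rw [Finset.mem_filter] at this
    exact irrefl_of r s this.2
  set rank : Fin k × Fin (ℓ + 1) → Fin M :=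
    fun s => ⟨(Finset.univ.filter (fun t => r t s)).card, hranklt s⟩ with hrankdef
  have hrmono : ∀ s s', r s s' → rank s < rank s' := by
    intro s s' h
    show (Finset.univ.filter (fun t => r t s)).card <
      (Finset.univ.filter (fun t => r t s')).card
    apply Finset.card_lt_card
    constructor
    · intro t ht
      rw [Finset.mem_filter] at *
      exact ⟨ht.1, trans_of r ht.2 h⟩
    · intro hsub
      have := hsub (by rw [Finset.mem_filter]; exact ⟨Finset.mem_univ s, h⟩)
      rw [Finset.mem_filter] at this
      exact irrefl_of r s this.2
  have hrank : ∀ s s', r s s' ↔ rank s < rank s' := by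
    intro s s'
    refine ⟨hrmono s s', fun h => ?_⟩
    rcases trichotomous_of r s s' with h1 | h1 | h1
    · exact h1
    · exact absurd h (by rw [h1]; exact lt_irrefl _)
    · exact absurd (h.trans (hrmono _ _ h1)) (lt_irrefl _)
  -- the word for orbit i
  set w : Fin k → ℕ → Fin N := fun i j =>
    pos (rank (i, ⟨j % (ℓ + 1), Nat.mod_lt j (Nat.succ_pos ℓ)⟩)) with hw
  -- get points
  have hx : ∀ i : Fin k, ∃ x : ℝ, ∀ j ≤ ℓ,
      T^[j] x ∈ Icc (a (w i j)) (b (w i j)) := by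
    intro i
    obtain ⟨c, d, hcd, hit⟩ := itinerary hTc hab h01 hcov' ℓ (w i)
    exact ⟨c, fun j hj => hit j hj ⟨c, left_mem_Icc.2 hcd, rfl⟩⟩
  choose x hxit using hx
  have hmem : ∀ (i : Fin k) (j : Fin (ℓ + 1)),
      T^[(j : ℕ)] (x i) ∈ Icc (a (pos (rank (i, j)))) (b (pos (rank (i, j)))) := by
    intro i j
    have hj : (j : ℕ) ≤ ℓ := Nat.lt_succ_iff.mp j.isLt
    have := hxit i j hj
    have hwj : w i (j : ℕ) = pos (rank (i, j)) := by
      simp only [hw]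
      congr 1
      congr 1
      ext : 1
      · rfl
      · simp [Fin.ext_iff, Nat.mod_eq_of_lt j.isLt]
    rwa [hwj] at this
  refine ⟨x, ?_, ?_⟩
  · intro i
    have := hxit i 0 (Nat.zero_le ℓ)
    simpa using h01 _ this
  · intro i i' j j'
    constructor
    · intro h
      have hlt' : rank (i, j) < rank (i', j') := (hrank _ _).1 h
      exact hsep _ _ hlt' _ (hmem i j) _ (hmem i' j')
    · intro h
      rcases trichotomous_of r (i, j) (i', j') with h1 | h1 | h1
      · exact h1
      · exfalso
        have hi : i = i' := congrArg Prod.fst h1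
        have hj : j = j' := congrArg Prod.snd h1
        rw [hi, hj] at h
        exact lt_irrefl _ h
      · exfalso
        have hlt' : rank (i', j') < rank (i, j) := (hrank _ _).1 h1
        have := hsep _ _ hlt' _ (hmem i' j') _ (hmem i j)
        exact absurd h (not_lt.2 this.le)
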